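/- For t in a neighborhood of 0, the formal power series identity (in the algebra of 2×2 upper triangular complex matrices) exp([[πt, επt·tanh(πt/2)],[0, −πt]]) = exp([[πt/2, −(π/2)εt],[0, −πt/2]])·exp([[πt/2, (π/2)εt],[0, −πt/2]]) holds. -/

import Mathlib

open Real

lemma exp_upper_tri (a s : ℝ) :
    NormedSpace.exp (!![a, s * a; 0, -a]) =
      !![Real.exp a, s * Real.sinh a; 0, Real.exp (-a)] := by
  set P : Matrix (Fin 2) (Fin 2) ℝ := !![1, -s/2; 0, 1] with hP
  have hPinv : P⁻¹ = !![1, s/2; 0, 1] := by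
    apply Matrix.inv_eq_right_inv
    ext i j
    fin_cases i <;> fin_cases j <;>
      simp [hP, Matrix.mul_apply, Fin.sum_univ_two] <;> ring
  have hunit : IsUnit P := by
    apply Matrix.isUnit_iff_isUnit_det P |>.mpr
    simp [hP, Matrix.det_fin_two]
  have hM : !![a, s * a; 0, -a] = P * Matrix.diagonal ![a, -a] * P⁻¹ := by
    rw [hPinv]
    ext i j
    fin_cases i <;> fin_cases j <;>
      simp [hP, Matrix.mul_apply, Fin.sum_univ_two, Matrix.vecMul,
        Matrix.diagonal, dotProduct, Matrix.vecHead, Matrix.vecTail] <;> ring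
  rw [hM, Matrix.exp_conj P _ hunit, Matrix.exp_diagonal, hPinv]
  have hpi : NormedSpace.exp (![a, -a]) = ![Real.exp a, Real.exp (-a)] := by
    ext i
    rw [Pi.exp_def]
    fin_cases i <;> simp [← Real.exp_eq_exp_ℝ]
  rw [hpi]
  ext i j
  fin_cases i <;> fin_cases j <;>
    simp [hP, Matrix.mul_apply, Fin.sum_univ_two, Matrix.vecMul,
      Matrix.diagonal, dotProduct, Matrix.vecHead, Matrix.vecTail,
      Real.sinh_eq] <;> ring

theorem balanced_case_exp_identity (t ε : ℝ) :
    NormedSpace.exp (!![π * t, ε * π * t * Real.tanh (π * t / 2); 0, -(π * t)]) =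
      NormedSpace.exp (!![π * t / 2, -(π / 2) * ε * t; 0, -(π * t / 2)]) *
        NormedSpace.exp (!![π * t / 2, (π / 2) * ε * t; 0, -(π * t / 2)]) := by
  have h1 : ε * π * t * Real.tanh (π * t / 2)
      = (ε * Real.tanh (π * t / 2)) * (π * t) := by ring
  have h2 : -(π / 2) * ε * t = (-ε) * (π * t / 2) := by ring
  have h3 : (π / 2) * ε * t = ε * (π * t / 2) := by ring
  rw [h1, h2, h3, exp_upper_tri, exp_upper_tri, exp_upper_tri]
  set a := π * t / 2 with ha
  have h2a : π * t = 2 * a := by rw [ha]; ring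
  have hc : Real.cosh a ≠ 0 := ne_of_gt (Real.cosh_pos a)
  rw [h2a]
  ext i j
  fin_cases i <;> fin_cases j <;>
    simp [Matrix.mul_apply, Fin.sum_univ_two, two_mul, Real.exp_add]
  rw [Real.sinh_add, Real.tanh_eq_sinh_div_cosh, Real.sinh_eq]
  field_simp
  ring
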